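/- As formal power series in t, (1+t)^{(y+x)/2} · (1−t)^{(y−x)/2} = ∑_{m=0}^∞ Cay_m(x;y) · t^m / m!, i.e., the exponential generating function of the Cayley continuants Cay_m(x;y) is (1+t)^{(y+x)/2}(1−t)^{(y−x)/2}. -/

import Mathlib

open Finset PowerSeries

/-- Falling factorial `r(r-1)⋯(r-j+1)`. -/
noncomputable def fallFac (r : ℂ) (j : ℕ) : ℂ := (descPochhammer ℂ j).eval r

/-- Rising factorial `r(r+1)⋯(r+j-1)`. -/
noncomputable def riseFac (r : ℂ) (j : ℕ) : ℂ := (ascPochhammer ℂ j).eval r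

/-- Generalized binomial coefficient `C(a,k) = a(a-1)⋯(a-k+1)/k!`. -/
noncomputable def gchoose (a : ℂ) (k : ℕ) : ℂ := fallFac a k / (k.factorial : ℂ)

/-- Cayley continuant `Cay_m(x;y)`. -/
noncomputable def Cay (m : ℕ) (x y : ℂ) : ℂ :=
  ∑ j ∈ range (m + 1),
    (m.choose j : ℂ) * fallFac ((x + y) / 2) j * riseFac ((x - y) / 2) (m - j)

/-- The binomial series `(1+t)^α = ∑ C(α,u) t^u` as a formal power series. -/
noncomputable def onePlusPow (α : ℂ) : PowerSeries ℂ := PowerSeries.mk fun u => gchoose α u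

/-- The binomial series `(1-t)^α = ∑ (-1)^u C(α,u) t^u` as a formal power series. -/
noncomputable def oneSubPow (α : ℂ) : PowerSeries ℂ :=
  PowerSeries.mk fun u => (-1 : ℂ) ^ u * gchoose α u

lemma riseFac_eq (r : ℂ) (k : ℕ) : riseFac r k = (-1)^k * fallFac (-r) k := by
  simpa [riseFac, fallFac] using ascPochhammer_eval_neg_eq_descPochhammer (R := ℂ) (-r) k

/-- Exponential generating function of the Cayley continuants:
`(1+t)^{(y+x)/2} (1−t)^{(y−x)/2} = ∑_m Cay_m(x;y) t^m / m!`. -/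
theorem cayley_generating_function (x y : ℂ) :
    onePlusPow ((y + x) / 2) * oneSubPow ((y - x) / 2) =
      PowerSeries.mk fun m => Cay m x y / (m.factorial : ℂ) := by
  ext m
  rw [show (y + x) / 2 = (x + y) / 2 by ring, coeff_mul, coeff_mk, Finset.Nat.sum_antidiagonal_eq_sum_range_succ_mk,
    Cay, Finset.sum_div]
  refine Finset.sum_congr rfl fun j hj => ?_
  have hjm : j ≤ m := Nat.lt_succ_iff.mp (Finset.mem_range.mp hj)
  simp only [onePlusPow, oneSubPow, coeff_mk]
  rw [riseFac_eq, show -((x - y)/2) = (y - x)/2 by ring, gchoose, gchoose]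
  have h1 : ((j.factorial : ℂ)) ≠ 0 := Nat.cast_ne_zero.mpr j.factorial_ne_zero
  have h2 : (((m - j).factorial : ℂ)) ≠ 0 := Nat.cast_ne_zero.mpr (m - j).factorial_ne_zero
  have h3 : ((m.factorial : ℂ)) ≠ 0 := Nat.cast_ne_zero.mpr m.factorial_ne_zero
  have hc : (m.choose j : ℂ) * ((j.factorial : ℂ) * ((m - j).factorial : ℂ)) =
      (m.factorial : ℂ) := by
    rw [← mul_assoc]; rw_mod_cast [Nat.choose_mul_factorial_mul_factorial hjm]
  field_simp
  linear_combination (-1 * fallFac ((x + y) / 2) j * fallFac ((y - x) / 2) (m - j)) * hc
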